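/- The sum over n ≥ 0 of n·p·(pq)^n·C_n equals q/(p−q), where C_n is the n-th Catalan number, p + q = 1, and 0 < q < 1/2. -/

import Mathlib

open Finset

lemma my_centralBinom_le_four_pow (n : ℕ) : Nat.centralBinom n ≤ 4 ^ n := by
  have h1 : Nat.centralBinom n ≤ ∑ m ∈ Finset.range (2 * n + 1), (2 * n).choose m :=
    Finset.single_le_sum (f := fun m => (2 * n).choose m) (fun _ _ => Nat.zero_le _)
      (Finset.mem_range.2 (by omega))
  have h2 := Nat.sum_range_choose (2 * n)
  have h3 : (2 : ℕ) ^ (2 * n) = 4 ^ n := by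
    rw [pow_mul]; norm_num
  omega

lemma my_catalan_le_four_pow (n : ℕ) : catalan n ≤ 4 ^ n := by
  have h1 := succ_mul_catalan_eq_centralBinom n
  have h2 := my_centralBinom_le_four_pow n
  nlinarith [Nat.one_le_iff_ne_zero.mpr (Nat.succ_ne_zero n)]

lemma my_catalan_bound {t C : ℝ} (h0 : 0 ≤ t) (htC : t ≤ C) (n : ℕ) :
    ‖(catalan n : ℝ) * t ^ n‖ ≤ (4 * C) ^ n := by
  have h4 : (catalan n : ℝ) ≤ 4 ^ n := by
    exact_mod_cast Nat.cast_le.mpr (my_catalan_le_four_pow n)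
  have hc0 : (0 : ℝ) ≤ (catalan n : ℝ) := Nat.cast_nonneg _
  have htn : (0:ℝ) ≤ t ^ n := pow_nonneg h0 n
  rw [Real.norm_eq_abs, abs_of_nonneg (mul_nonneg hc0 htn), mul_pow]
  have h5 : t ^ n ≤ C ^ n := pow_le_pow_left₀ h0 htC n
  nlinarith [pow_nonneg (le_trans h0 htC) n, pow_pos (show (0:ℝ) < 4 by norm_num) n]

/-- The Catalan generating function at `p*q` sums to `1/p`. -/
lemma catalan_hasSum (p q : ℝ) (hpq : p + q = 1) (hq0 : 0 < q) (hq : q < 1/2) :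
    HasSum (fun n : ℕ => (catalan n : ℝ) * (p * q) ^ n) (1 / p) := by
  have hp : q < p := by linarith
  have hp0 : 0 < p := lt_trans hq0 hp
  set x := p * q with hxdef
  have hx0 : 0 < x := mul_pos hp0 hq0
  have hx4 : 4 * x < 1 := by nlinarith [sq_nonneg (p - q)]
  have hgeo : Summable (fun n : ℕ => (4 * x) ^ n) :=
    summable_geometric_of_lt_one (by positivity) (by linarith)
  -- summability on [0, x]
  have hsummable : ∀ t ∈ Set.Icc (0:ℝ) x, Summable (fun n : ℕ => (catalan n : ℝ) * t ^ n) := by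
    intro t ht
    refine Summable.of_norm (hgeo.of_nonneg_of_le (fun n => norm_nonneg _) ?_)
    exact my_catalan_bound ht.1 ht.2
  set g : ℝ → ℝ := fun t => ∑' n : ℕ, (catalan n : ℝ) * t ^ n with hgdef
  -- the quadratic functional equation
  have hquad : ∀ t ∈ Set.Icc (0:ℝ) x, g t = 1 + t * (g t * g t) := by
    intro t ht
    have hs := hsummable t ht
    have hnorm : Summable (fun n : ℕ => ‖(catalan n : ℝ) * t ^ n‖) :=
      hgeo.of_nonneg_of_le (fun n => norm_nonneg _) (my_catalan_bound ht.1 ht.2)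
    have hmul := tsum_mul_tsum_eq_tsum_sum_antidiagonal_of_summable_norm hnorm hnorm
    have key : ∀ n : ℕ, (catalan (n+1) : ℝ) * t ^ (n+1) =
        t * ∑ ij ∈ antidiagonal n,
          ((catalan ij.1 : ℝ) * t ^ ij.1) * ((catalan ij.2 : ℝ) * t ^ ij.2) := by
      intro n
      rw [catalan_succ']
      push_cast
      rw [Finset.sum_mul, Finset.mul_sum]
      refine Finset.sum_congr rfl fun ij hij => ?_
      have hij' : ij.1 + ij.2 = n := Finset.HasAntidiagonal.mem_antidiagonal.mp hij
      rw [← hij', pow_succ, pow_add]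
      ring
    have hshift := Summable.tsum_eq_zero_add hs
    simp only [catalan_zero, Nat.cast_one, pow_zero, one_mul] at hshift
    calc g t = ∑' n : ℕ, (catalan n : ℝ) * t ^ n := rfl
      _ = 1 + ∑' n : ℕ, (catalan (n+1) : ℝ) * t ^ (n+1) := hshift
      _ = 1 + ∑' n : ℕ, t * ∑ ij ∈ antidiagonal n,
            ((catalan ij.1 : ℝ) * t ^ ij.1) * ((catalan ij.2 : ℝ) * t ^ ij.2) := by
          congr 1; exact tsum_congr key
      _ = 1 + t * ∑' n : ℕ, ∑ ij ∈ antidiagonal n,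
            ((catalan ij.1 : ℝ) * t ^ ij.1) * ((catalan ij.2 : ℝ) * t ^ ij.2) := by
          rw [tsum_mul_left]
      _ = 1 + t * (g t * g t) := by rw [← hmul]
  -- continuity on [0, x]
  have hcont : Continuous (fun t : Set.Icc (0:ℝ) x => g ↑t) := by
    refine continuous_tsum (f := fun n (t : Set.Icc (0:ℝ) x) => (catalan n : ℝ) * (t:ℝ) ^ n)
      (fun n => by fun_prop) hgeo (fun n t => ?_)
    exact my_catalan_bound t.2.1 t.2.2 n
  -- dichotomy
  have hdich : ∀ t ∈ Set.Icc (0:ℝ) x, g t ≤ 2 ∨ 1 ≤ 2 * t * g t := by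
    intro t ht
    by_cases h2 : g t ≤ 2
    · exact Or.inl h2
    · right
      push_neg at h2
      by_contra hcon
      push_neg at hcon
      have hq' := hquad t ht
      have hgpos : (0:ℝ) < g t := by linarith
      nlinarith [mul_lt_mul_of_pos_right hcon hgpos]
  -- the clopen argument
  have hzero_mem : (0:ℝ) ∈ Set.Icc (0:ℝ) x := ⟨le_rfl, hx0.le⟩
  have hx_mem : x ∈ Set.Icc (0:ℝ) x := ⟨hx0.le, le_rfl⟩
  have hg0 : g 0 = 1 := by have := hquad 0 hzero_mem; simpa using this
  haveI : PreconnectedSpace (Set.Icc (0:ℝ) x) := Subtype.preconnectedSpace isPreconnected_Icc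
  set U : Set (Set.Icc (0:ℝ) x) := {t | g ↑t ≤ 2} with hUdef
  have hUcompl : Uᶜ = {t : Set.Icc (0:ℝ) x | 1 ≤ 2 * ↑t * g ↑t} := by
    ext t
    simp only [Set.mem_compl_iff, hUdef, Set.mem_setOf_eq, not_le]
    constructor
    · intro h
      rcases hdich ↑t t.2 with h' | h'
      · linarith
      · exact h'
    · intro h
      by_contra h2
      push_neg at h2
      have ht1 : (0:ℝ) ≤ ↑t := t.2.1
      have ht2 : (↑t : ℝ) ≤ x := t.2.2
      nlinarith
  have hUclopen : IsClopen U := by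
    constructor
    · exact isClosed_le hcont continuous_const
    · rw [← isClosed_compl_iff, hUcompl]
      exact isClosed_le continuous_const ((continuous_const.mul continuous_subtype_val).mul hcont)
  have hUuniv : U = Set.univ :=
    hUclopen.eq_univ ⟨⟨0, hzero_mem⟩, by simp [hUdef, hg0]⟩
  have hgx2 : g x ≤ 2 := by
    have : (⟨x, hx_mem⟩ : Set.Icc (0:ℝ) x) ∈ U := hUuniv ▸ Set.mem_univ _
    exact this
  -- solve the quadratic
  have hquadx := hquad x hx_mem
  have hfact : (p * g x - 1) * (q * g x - 1) = 0 := by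
    linear_combination (-1 : ℝ) * hquadx - (g x * g x) * hxdef - g x * hpq
  have hgx : g x = 1 / p := by
    rcases mul_eq_zero.mp hfact with h | h
    · field_simp
      linarith
    · exfalso
      have : g x = 1 / q := by field_simp; linarith
      rw [this] at hgx2
      have : (2:ℝ) < 1 / q := by
        rw [lt_div_iff₀ hq0]; linarith
      linarith
  have := (hsummable x hx_mem).hasSum
  rwa [show (∑' n : ℕ, (catalan n : ℝ) * x ^ n) = 1 / p from hgx] at this

theorem selfish_mining_catalan_expectation (p q : ℝ) (hpq : p + q = 1)
    (hq0 : 0 < q) (hq : q < 1/2) :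
    HasSum (fun n : ℕ => (n : ℝ) * p * (p * q) ^ n * (catalan n : ℝ))
      (q / (p - q)) := by
  have hp : q < p := by linarith
  have hp0 : 0 < p := lt_trans hq0 hp
  set x := p * q with hxdef
  have hx0 : 0 < x := mul_pos hp0 hq0
  have hx4 : 4 * x < 1 := by nlinarith [sq_nonneg (p - q)]
  have hf : HasSum (fun n : ℕ => (catalan n : ℝ) * x ^ n) (1 / p) :=
    catalan_hasSum p q hpq hq0 hq
  have hfs : Summable (fun n : ℕ => (catalan n : ℝ) * x ^ n) := hf.summable
  have hftsum : (∑' n : ℕ, (catalan n : ℝ) * x ^ n) = 1 / p := hf.tsum_eq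
  have hfnorm : Summable (fun n : ℕ => ‖(catalan n : ℝ) * x ^ n‖) := by
    refine (summable_geometric_of_lt_one (by positivity) (by linarith : 4*x < 1)).of_nonneg_of_le
      (fun n => norm_nonneg _) (my_catalan_bound hx0.le le_rfl)
  -- summability of n * C_n * x^n
  set a : ℕ → ℝ := fun n => (n : ℝ) * (catalan n : ℝ) * x ^ n with hadef
  have hanorm : Summable (fun n : ℕ => ‖a n‖) := by
    have hgeo : Summable (fun n : ℕ => (n : ℝ) * (4 * x) ^ n) := by
      have := summable_pow_mul_geometric_of_norm_lt_one (R := ℝ) 1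
        (r := 4 * x) (by rw [Real.norm_eq_abs, abs_of_pos (by positivity)]; linarith)
      simpa using this
    refine hgeo.of_nonneg_of_le (fun n => norm_nonneg _) (fun n => ?_)
    have h1 : ‖a n‖ = (n : ℝ) * ‖(catalan n : ℝ) * x ^ n‖ := by
      simp [hadef, abs_mul, abs_of_nonneg (show (0:ℝ) ≤ (n:ℝ) from Nat.cast_nonneg n), mul_assoc]
    rw [h1]
    exact mul_le_mul_of_nonneg_left (my_catalan_bound hx0.le le_rfl n) (Nat.cast_nonneg n)
  have has : Summable a := hanorm.of_norm
  set s : ℝ := ∑' n, a n with hsdef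
  -- the functional equation for s
  have key : ∀ n : ℕ, a (n + 1) =
      x * ((∑ ij ∈ antidiagonal n, a ij.1 * ((catalan ij.2 : ℝ) * x ^ ij.2))
         + (∑ ij ∈ antidiagonal n, ((catalan ij.1 : ℝ) * x ^ ij.1) * a ij.2)
         + (∑ ij ∈ antidiagonal n,
              ((catalan ij.1 : ℝ) * x ^ ij.1) * ((catalan ij.2 : ℝ) * x ^ ij.2))) := by
    intro n
    have hcs : (catalan (n+1) : ℝ) = ∑ ij ∈ antidiagonal n, (catalan ij.1 : ℝ) * (catalan ij.2 : ℝ) := by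
      rw [catalan_succ']; push_cast; rfl
    simp only [hadef, hcs]
    rw [Finset.mul_sum, Finset.sum_mul, ← Finset.sum_add_distrib, ← Finset.sum_add_distrib,
      Finset.mul_sum]
    refine Finset.sum_congr rfl fun ij hij => ?_
    have hij' : ij.1 + ij.2 = n := Finset.HasAntidiagonal.mem_antidiagonal.mp hij
    rw [← hij']
    push_cast
    rw [pow_succ, pow_add]
    ring
  -- summability of the three convolution series
  have hS3 : Summable (fun n => ∑ ij ∈ antidiagonal n,
      ((catalan ij.1 : ℝ) * x ^ ij.1) * ((catalan ij.2 : ℝ) * x ^ ij.2)) :=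
    summable_sum_mul_antidiagonal_of_summable_norm'
      (f := fun k : ℕ => (catalan k : ℝ) * x ^ k) (g := fun k : ℕ => (catalan k : ℝ) * x ^ k)
      hfnorm hfs hfnorm hfs
  have hS1 : Summable (fun n => ∑ ij ∈ antidiagonal n,
      a ij.1 * ((catalan ij.2 : ℝ) * x ^ ij.2)) :=
    summable_sum_mul_antidiagonal_of_summable_norm'
      (f := a) (g := fun k : ℕ => (catalan k : ℝ) * x ^ k) hanorm has hfnorm hfs
  have hS2 : Summable (fun n => ∑ ij ∈ antidiagonal n,
      ((catalan ij.1 : ℝ) * x ^ ij.1) * a ij.2) :=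
    summable_sum_mul_antidiagonal_of_summable_norm'
      (f := fun k : ℕ => (catalan k : ℝ) * x ^ k) (g := a) hfnorm hfs hanorm has
  -- Cauchy products
  have hT1 : (∑' n, ∑ ij ∈ antidiagonal n, a ij.1 * ((catalan ij.2 : ℝ) * x ^ ij.2))
      = s * (1 / p) := by
    rw [← tsum_mul_tsum_eq_tsum_sum_antidiagonal_of_summable_norm
      (f := a) (g := fun k : ℕ => (catalan k : ℝ) * x ^ k) hanorm hfnorm, hftsum, hsdef]
  have hT2 : (∑' n, ∑ ij ∈ antidiagonal n, ((catalan ij.1 : ℝ) * x ^ ij.1) * a ij.2)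
      = (1 / p) * s := by
    rw [← tsum_mul_tsum_eq_tsum_sum_antidiagonal_of_summable_norm
      (f := fun k : ℕ => (catalan k : ℝ) * x ^ k) (g := a) hfnorm hanorm, hftsum, hsdef]
  have hT3 : (∑' n, ∑ ij ∈ antidiagonal n,
      ((catalan ij.1 : ℝ) * x ^ ij.1) * ((catalan ij.2 : ℝ) * x ^ ij.2))
      = (1 / p) * (1 / p) := by
    rw [← tsum_mul_tsum_eq_tsum_sum_antidiagonal_of_summable_norm
      (f := fun k : ℕ => (catalan k : ℝ) * x ^ k) (g := fun k : ℕ => (catalan k : ℝ) * x ^ k)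
      hfnorm hfnorm, hftsum]
  have hshift := Summable.tsum_eq_zero_add has
  have ha0 : a 0 = 0 := by simp [hadef]
  have hs_eq : s = x * (s * (1 / p) + (1 / p) * s + (1 / p) * (1 / p)) := by
    calc s = a 0 + ∑' n, a (n + 1) := hshift
      _ = ∑' n, a (n + 1) := by rw [ha0, zero_add]
      _ = ∑' n, x * ((∑ ij ∈ antidiagonal n, a ij.1 * ((catalan ij.2 : ℝ) * x ^ ij.2))
            + (∑ ij ∈ antidiagonal n, ((catalan ij.1 : ℝ) * x ^ ij.1) * a ij.2)
            + (∑ ij ∈ antidiagonal n,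
                ((catalan ij.1 : ℝ) * x ^ ij.1) * ((catalan ij.2 : ℝ) * x ^ ij.2))) :=
          tsum_congr key
      _ = x * ∑' n, ((∑ ij ∈ antidiagonal n, a ij.1 * ((catalan ij.2 : ℝ) * x ^ ij.2))
            + (∑ ij ∈ antidiagonal n, ((catalan ij.1 : ℝ) * x ^ ij.1) * a ij.2)
            + (∑ ij ∈ antidiagonal n,
                ((catalan ij.1 : ℝ) * x ^ ij.1) * ((catalan ij.2 : ℝ) * x ^ ij.2))) := by
          rw [tsum_mul_left]
      _ = x * (s * (1 / p) + (1 / p) * s + (1 / p) * (1 / p)) := by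
          rw [Summable.tsum_add (hS1.add hS2) hS3, Summable.tsum_add hS1 hS2, hT1, hT2, hT3]
  -- solve for s
  have hpq2 : p - q > 0 := by linarith
  have hs_val : s = q / (p * (p - q)) := by
    have h1 : s * (p - q) * p = q := by
      field_simp [hxdef] at hs_eq
      have h5 : (p * p) * (s * p) = (p * p) * (2 * q * (s * p) + q) := by
        linear_combination p * hs_eq - p * (s * p * 2 + 1) * hxdef
      have h4 : s * p = 2 * q * (s * p) + q := mul_left_cancel₀ (by positivity) h5
      linear_combination h4 + s * p * hpq
    field_simp
    linarith [h1]
  -- conclude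
  have htarget := (has.hasSum.mul_left p)
  rw [hsdef] at hs_val
  rw [hs_val] at htarget
  have heq : (fun n : ℕ => p * a n) = fun n : ℕ => (n : ℝ) * p * (p * q) ^ n * (catalan n : ℝ) := by
    funext n
    simp only [hadef, ← hxdef]
    ring
  rw [heq] at htarget
  have hval : p * (q / (p * (p - q))) = q / (p - q) := by
    field_simp
  rwa [hval] at htarget
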